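/- (Utility loss bound, explicit-noise form) Let t_1 < … < t_M be event times with counts n_i > 0, 0 ≤ d_i ≤ n_i, and per-time noises ε_i ≥ 0. Then for every t, the utility loss ΔS(t) = |Ŝ_cent(t) − Ŝ_fed(t)| satisfies ΔS(t) ≤ ( ∏_{t_i ≤ t} (1 − d_i/n_i) ) · ∑_{t_i ≤ t} ε_i/(n_i + ε_i), where Ŝ_cent(t) = ∏_{t_i ≤ t} (1 − d_i/n_i) and Ŝ_fed(t) = ∏_{t_i ≤ t} (1 − (d_i + ε_i)/(n_i + ε_i)). -/
import Mathlib


open Finset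

lemma prod_sub_prod_le_aux {ι : Type*} [DecidableEq ι] (s : Finset ι) (a b c : ι → ℝ)
    (hb : ∀ i ∈ s, 0 ≤ b i) (hba : ∀ i ∈ s, b i ≤ a i)
    (habc : ∀ i ∈ s, a i - b i ≤ a i * c i) (hc : ∀ i ∈ s, 0 ≤ c i) :
    ∏ i ∈ s, a i - ∏ i ∈ s, b i ≤ (∏ i ∈ s, a i) * ∑ i ∈ s, c i := by
  induction s using Finset.induction with
  | empty => simp
  | @insert i s hi ih =>
    simp only [Finset.prod_insert hi, Finset.sum_insert hi]
    have hbs : ∀ j ∈ s, 0 ≤ b j := fun j hj => hb j (Finset.mem_insert_of_mem hj)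
    have hbas : ∀ j ∈ s, b j ≤ a j := fun j hj => hba j (Finset.mem_insert_of_mem hj)
    have hpb : 0 ≤ ∏ j ∈ s, b j := Finset.prod_nonneg hbs
    have hpa : 0 ≤ ∏ j ∈ s, a j :=
      Finset.prod_nonneg fun j hj => (hbs j hj).trans (hbas j hj)
    have hpba : ∏ j ∈ s, b j ≤ ∏ j ∈ s, a j := Finset.prod_le_prod hbs hbas
    have hai : 0 ≤ a i := (hb i (Finset.mem_insert_self i s)).trans
      (hba i (Finset.mem_insert_self i s))
    have hIH := ih hbs hbas (fun j hj => habc j (Finset.mem_insert_of_mem hj))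
      (fun j hj => hc j (Finset.mem_insert_of_mem hj))
    have key : a i * ∏ j ∈ s, a j - b i * ∏ j ∈ s, b j
        = a i * (∏ j ∈ s, a j - ∏ j ∈ s, b j) + (a i - b i) * ∏ j ∈ s, b j := by ring
    rw [key]
    have h1 : a i * (∏ j ∈ s, a j - ∏ j ∈ s, b j) ≤ a i * ((∏ j ∈ s, a j) * ∑ j ∈ s, c j) :=
      mul_le_mul_of_nonneg_left hIH hai
    have h2 : (a i - b i) * ∏ j ∈ s, b j ≤ (a i * c i) * ∏ j ∈ s, a j := by
      have hab : 0 ≤ a i - b i := sub_nonneg.mpr (hba i (Finset.mem_insert_self i s))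
      calc (a i - b i) * ∏ j ∈ s, b j ≤ (a i - b i) * ∏ j ∈ s, a j :=
            mul_le_mul_of_nonneg_left hpba hab
        _ ≤ (a i * c i) * ∏ j ∈ s, a j :=
            mul_le_mul_of_nonneg_right (habc i (Finset.mem_insert_self i s)) hpa
    calc a i * (∏ j ∈ s, a j - ∏ j ∈ s, b j) + (a i - b i) * ∏ j ∈ s, b j
        ≤ a i * ((∏ j ∈ s, a j) * ∑ j ∈ s, c j) + (a i * c i) * ∏ j ∈ s, a j :=
          add_le_add h1 h2
      _ = a i * (∏ j ∈ s, a j) * (c i + ∑ j ∈ s, c j) := by ring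

/-- Utility loss bound, explicit-noise form:
`ΔS(t) ≤ (∏_{t_i ≤ t} (1 − d_i/n_i)) · ∑_{t_i ≤ t} ε_i/(n_i + ε_i)`. -/
theorem utility_loss_bound_explicit (M : ℕ) (τ d n ε : Fin M → ℝ)
    (hτ : StrictMono τ) (hn : ∀ i, 0 < n i) (hd0 : ∀ i, 0 ≤ d i)
    (hdn : ∀ i, d i ≤ n i) (hε : ∀ i, 0 ≤ ε i) (t : ℝ) :
    |(∏ i ∈ univ.filter (fun i => τ i ≤ t), (1 - d i / n i))
        - ∏ i ∈ univ.filter (fun i => τ i ≤ t), (1 - (d i + ε i) / (n i + ε i))|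
      ≤ (∏ i ∈ univ.filter (fun i => τ i ≤ t), (1 - d i / n i))
        * ∑ i ∈ univ.filter (fun i => τ i ≤ t), ε i / (n i + ε i) := by
  set s := univ.filter (fun i => τ i ≤ t)
  have hnε : ∀ i, 0 < n i + ε i := fun i => add_pos_of_pos_of_nonneg (hn i) (hε i)
  have hb : ∀ i ∈ s, (0:ℝ) ≤ 1 - (d i + ε i) / (n i + ε i) := by
    intro i _
    have : (d i + ε i) / (n i + ε i) ≤ 1 := by
      rw [div_le_one (hnε i)]; linarith [hdn i]
    linarith
  have hba : ∀ i ∈ s, 1 - (d i + ε i) / (n i + ε i) ≤ 1 - d i / n i := by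
    intro i _
    have h : d i / n i ≤ (d i + ε i) / (n i + ε i) := by
      rw [div_le_div_iff₀ (hn i) (hnε i)]
      nlinarith [hdn i, hε i, hd0 i]
    linarith
  have habc : ∀ i ∈ s, (1 - d i / n i) - (1 - (d i + ε i) / (n i + ε i))
      ≤ (1 - d i / n i) * (ε i / (n i + ε i)) := by
    intro i _
    have h1 := (hn i).ne'
    have h2 := (hnε i).ne'
    have : (1 - d i / n i) - (1 - (d i + ε i) / (n i + ε i))
        = (1 - d i / n i) * (ε i / (n i + ε i)) := by
      field_simp
      ring
    linarith
  have hc : ∀ i ∈ s, (0:ℝ) ≤ ε i / (n i + ε i) :=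
    fun i _ => div_nonneg (hε i) (hnε i).le
  have hle := prod_sub_prod_le_aux s (fun i => 1 - d i / n i)
    (fun i => 1 - (d i + ε i) / (n i + ε i)) (fun i => ε i / (n i + ε i)) hb hba habc hc
  have hnonneg : ∏ i ∈ s, (1 - (d i + ε i) / (n i + ε i)) ≤ ∏ i ∈ s, (1 - d i / n i) :=
    Finset.prod_le_prod hb hba
  rw [abs_of_nonneg (sub_nonneg.mpr hnonneg)]
  exact hle
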